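/- For every integer k ≥ 1 there exists a function φ : [0,1/2] → ℝ that is three times continuously differentiable on [0,1/2], satisfies φ(η) > 0 for all η ∈ [0,1/2], φ'''(η) = 1/φ(η) for all η ∈ [0,1/2], φ(0) = φ(1/2) = 1/k, and φ'(0) = 1. -/

import Mathlib

open Set Filter Real Topology

namespace ApproxSolve

/-- truncated reciprocal -/
noncomputable def hh (δ y : ℝ) : ℝ := (max y δ)⁻¹

variable {δ : ℝ}

lemma hh_pos (hδ : 0 < δ) (y : ℝ) : 0 < hh δ y :=
  inv_pos.2 (lt_of_lt_of_le hδ (le_max_right _ _))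

lemma hh_le (hδ : 0 < δ) (y : ℝ) : hh δ y ≤ δ⁻¹ :=
  inv_anti₀ hδ (le_max_right _ _)

lemma hh_eq {y : ℝ} (h : δ ≤ y) : hh δ y = y⁻¹ := by
  rw [hh, max_eq_left h]

lemma mul_hh_le_one (hδ : 0 < δ) (y : ℝ) : y * hh δ y ≤ 1 := by
  have h1 : y ≤ max y δ := le_max_left _ _
  have h2 : 0 < max y δ := lt_of_lt_of_le hδ (le_max_right _ _)
  calc y * (max y δ)⁻¹ ≤ max y δ * (max y δ)⁻¹ := by
        apply mul_le_mul_of_nonneg_right h1 (inv_nonneg.2 h2.le)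
    _ = 1 := mul_inv_cancel₀ h2.ne'

lemma hh_lipschitz (hδ : 0 < δ) : LipschitzWith (Real.toNNReal (δ⁻¹ * δ⁻¹)) (hh δ) := by
  apply LipschitzWith.of_dist_le_mul
  intro y z
  rw [Real.coe_toNNReal _ (by positivity)]
  have hy : 0 < max y δ := lt_of_lt_of_le hδ (le_max_right _ _)
  have hz : 0 < max z δ := lt_of_lt_of_le hδ (le_max_right _ _)
  have key : hh δ y - hh δ z = (max z δ - max y δ) / (max y δ * max z δ) := by
    simp only [hh]; field_simp
  rw [Real.dist_eq, Real.dist_eq, key, abs_div]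
  have h1 : |max z δ - max y δ| ≤ |z - y| := by
    simpa [max_comm] using abs_max_sub_max_le_abs z y δ
  have h2 : δ * δ ≤ |max y δ * max z δ| := by
    rw [abs_of_pos (by positivity)]
    exact mul_le_mul (le_max_right _ _) (le_max_right _ _) hδ.le hy.le
  have h3 : (0:ℝ) < δ * δ := by positivity
  calc |max z δ - max y δ| / |max y δ * max z δ| ≤ |z - y| / (δ * δ) :=
        div_le_div₀ (abs_nonneg _) h1 h3 h2
    _ = δ⁻¹ * δ⁻¹ * |y - z| := by rw [abs_sub_comm]; field_simp

/-- the vector field of the first-order system -/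
noncomputable def Fv (δ : ℝ) : ℝ × ℝ × ℝ → ℝ × ℝ × ℝ :=
  fun z => (z.2.1, z.2.2, hh δ z.1)

noncomputable def KK (δ : ℝ) : NNReal :=
  1 * 1 ⊔ (1 * 1 ⊔ Real.toNNReal (δ⁻¹ * δ⁻¹) * 1)

lemma Fv_lipschitz (hδ : 0 < δ) : LipschitzWith (KK δ) (Fv δ) := by
  have h1 : LipschitzWith (1 * 1) (fun z : ℝ × ℝ × ℝ => z.2.1) :=
    LipschitzWith.prod_fst.comp LipschitzWith.prod_snd
  have h2 : LipschitzWith (1 * 1) (fun z : ℝ × ℝ × ℝ => z.2.2) :=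
    LipschitzWith.prod_snd.comp LipschitzWith.prod_snd
  have h3 : LipschitzWith (Real.toNNReal (δ⁻¹ * δ⁻¹) * 1)
      (fun z : ℝ × ℝ × ℝ => hh δ z.1) :=
    (hh_lipschitz hδ).comp LipschitzWith.prod_fst
  exact h1.prodMk (h2.prodMk h3)

lemma exists_sol (hδ : 0 < δ) (c s : ℝ) :
    ∃ f : ℝ → ℝ × ℝ × ℝ, f 0 = (c, 1, s) ∧
      ∀ t ∈ Icc (0:ℝ) (1/2), HasDerivWithinAt f (Fv δ (f t)) (Icc (0:ℝ) (1/2)) t := by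
  have hn : (0:ℝ) ≤ ‖((c, 1, s) : ℝ × ℝ × ℝ)‖ := norm_nonneg _
  have hd : (0:ℝ) ≤ δ⁻¹ := by positivity
  have ha : ((‖((c, 1, s) : ℝ × ℝ × ℝ)‖₊ + Real.toNNReal δ⁻¹ : NNReal) : ℝ)
      = ‖((c, 1, s) : ℝ × ℝ × ℝ)‖ + δ⁻¹ := by
    rw [NNReal.coe_add, coe_nnnorm, Real.coe_toNNReal _ hd]
  have hpl : IsPicardLindelof (fun _ z => Fv δ z) (tmin := 0) (tmax := 1/2) ⟨0, by norm_num⟩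
      ((c, 1, s) : ℝ × ℝ × ℝ) (‖((c, 1, s) : ℝ × ℝ × ℝ)‖₊ + Real.toNNReal δ⁻¹) 0
      (2 * (‖((c, 1, s) : ℝ × ℝ × ℝ)‖₊ + Real.toNNReal δ⁻¹)) (KK δ) := by
    constructor
    · intro t _
      exact (Fv_lipschitz hδ).lipschitzOnWith
    · intro x _
      exact continuousOn_const
    · intro t _ x hx
      have hxn : ‖x‖ ≤ ‖((c, 1, s) : ℝ × ℝ × ℝ)‖ + (‖((c, 1, s) : ℝ × ℝ × ℝ)‖ + δ⁻¹) := by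
        have h := mem_closedBall_iff_norm.1 hx
        rw [ha] at h
        calc ‖x‖ = ‖(c, 1, s) + (x - (c, 1, s))‖ := by ring_nf
          _ ≤ ‖((c, 1, s) : ℝ × ℝ × ℝ)‖ + ‖x - (c, 1, s)‖ := norm_add_le _ _
          _ ≤ _ := by linarith
      have h21 : ‖x.2.1‖ ≤ ‖x‖ := le_trans (norm_fst_le x.2) (norm_snd_le x)
      have h22 : ‖x.2.2‖ ≤ ‖x‖ := le_trans (norm_snd_le x.2) (norm_snd_le x)
      have hhh : ‖hh δ x.1‖ ≤ δ⁻¹ := by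
        rw [Real.norm_eq_abs, abs_of_pos (hh_pos hδ _)]
        exact hh_le hδ _
      have hFv : ‖Fv δ x‖ = max ‖x.2.1‖ (max ‖x.2.2‖ ‖hh δ x.1‖) := rfl
      show ‖Fv δ x‖ ≤ ((2 * (‖((c, 1, s) : ℝ × ℝ × ℝ)‖₊ + Real.toNNReal δ⁻¹) : NNReal) : ℝ)
      rw [hFv, NNReal.coe_mul, ha]
      push_cast
      apply max_le (by linarith)
      apply max_le (by linarith) (by linarith)
    · show ((2 * (‖((c, 1, s) : ℝ × ℝ × ℝ)‖₊ + Real.toNNReal δ⁻¹) : NNReal) : ℝ)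
          * max (1/2 - 0) (0 - 0) ≤
          ((‖((c, 1, s) : ℝ × ℝ × ℝ)‖₊ + Real.toNNReal δ⁻¹ : NNReal) : ℝ) - ((0 : NNReal) : ℝ)
      rw [show max (1/2 - 0 : ℝ) (0 - 0) = 1/2 by norm_num, NNReal.coe_mul]
      push_cast
      linarith
  obtain ⟨f, hf0, hf⟩ := hpl.exists_eq_forall_mem_Icc_hasDerivWithinAt₀
  exact ⟨f, hf0, hf⟩


lemma hasDerivAt_of_within {f f' : ℝ → ℝ} {lo hi : ℝ}
    (hf : ∀ t ∈ Icc lo hi, HasDerivWithinAt f (f' t) (Icc lo hi) t)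
    {x : ℝ} (hx : x ∈ Ioo lo hi) : HasDerivAt f (f' x) x :=
  (hf x (Ioo_subset_Icc_self hx)).hasDerivAt (Icc_mem_nhds hx.1 hx.2)

lemma myAnti {f f' : ℝ → ℝ} {lo hi : ℝ}
    (hf : ∀ t ∈ Icc lo hi, HasDerivWithinAt f (f' t) (Icc lo hi) t)
    (hneg : ∀ t ∈ Ioo lo hi, f' t ≤ 0) : AntitoneOn f (Icc lo hi) := by
  apply antitoneOn_of_deriv_nonpos (convex_Icc lo hi)
    (fun t ht => (hf t ht).continuousWithinAt)
  · intro x hx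
    rw [interior_Icc] at hx
    exact (hasDerivAt_of_within hf hx).differentiableAt.differentiableWithinAt
  · intro x hx
    rw [interior_Icc] at hx
    rw [(hasDerivAt_of_within hf hx).deriv]
    exact hneg x hx

section Key

variable {sol : ℝ → ℝ × ℝ × ℝ} {c s : ℝ}

/-- The first-integral argument: an interior minimum of the first component must be negative. -/
lemma key (hδ : 0 < δ) (hc : 0 < c) (hs : s ≤ 0) (h0 : sol 0 = (c, 1, s))
    (hA : ∀ t ∈ Icc (0:ℝ) (1/2), HasDerivWithinAt (fun u => (sol u).1) ((sol t).2.1) (Icc (0:ℝ) (1/2)) t)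
    (hP : ∀ t ∈ Icc (0:ℝ) (1/2), HasDerivWithinAt (fun u => (sol u).2.1) ((sol t).2.2) (Icc (0:ℝ) (1/2)) t)
    (hQ : ∀ t ∈ Icc (0:ℝ) (1/2), HasDerivWithinAt (fun u => (sol u).2.2) (hh δ ((sol t).1)) (Icc (0:ℝ) (1/2)) t)
    {τ : ℝ} (hτ : τ ∈ Ioo (0:ℝ) (1/2)) (hmin : IsMinOn (fun u => (sol u).1) (Icc (0:ℝ) (1/2)) τ) :
    (sol τ).1 < 0 := by
  by_contra hge
  push_neg at hge
  have hτI : τ ∈ Icc (0:ℝ) (1/2) := Ioo_subset_Icc_self hτ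
  -- first derivative vanishes at interior min
  have hlocmin : IsLocalMin (fun u => (sol u).1) τ := hmin.isLocalMin (Icc_mem_nhds hτ.1 hτ.2)
  have hpτ : (sol τ).2.1 = 0 := hlocmin.hasDerivAt_eq_zero (hasDerivAt_of_within hA hτ)
  -- second derivative nonneg at interior min
  have hqτ : 0 ≤ (sol τ).2.2 := by
    by_contra hq
    push_neg at hq
    have hpd : HasDerivAt (fun u => (sol u).2.1) ((sol τ).2.2) τ := hasDerivAt_of_within hP hτ
    rw [hasDerivAt_iff_tendsto_slope] at hpd
    have hev : ∀ᶠ x in 𝓝[>] τ, slope (fun u => (sol u).2.1) τ x < (sol τ).2.2 / 2 := by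
      have h1 : {y : ℝ | y < (sol τ).2.2 / 2} ∈ 𝓝 ((sol τ).2.2) := Iio_mem_nhds (by linarith)
      have h2 := hpd h1
      have hmono : 𝓝[>] τ ≤ 𝓝[≠] τ :=
        nhdsWithin_mono τ (fun x (hx : x ∈ Ioi τ) =>
          Set.mem_compl_singleton_iff.mpr (LT.lt.ne' (show τ < x from hx)))
      exact hmono h2
    rw [eventually_nhdsWithin_iff] at hev
    rw [Metric.eventually_nhds_iff] at hev
    obtain ⟨ε, hε, hball⟩ := hev
    set t2 := τ + min ε (1/2 - τ) / 2 with ht2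
    have hmpos : 0 < min ε (1/2 - τ) := lt_min hε (by linarith [hτ.2])
    have hτt2 : τ < t2 := by
      have := half_pos hmpos
      simp only [ht2]; linarith
    have ht2half : t2 < 1/2 := by
      have : min ε (1/2 - τ) ≤ 1/2 - τ := min_le_right _ _
      simp only [ht2]; linarith
    have hpneg : ∀ x ∈ Ioo τ t2, (sol x).2.1 < 0 := by
      intro x hx
      have hd : dist x τ < ε := by
        rw [Real.dist_eq, abs_of_pos (by linarith [hx.1] : (0:ℝ) < x - τ)]
        have : min ε (1/2 - τ) ≤ ε := min_le_left _ _
        have := hx.2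
        simp only [ht2] at this
        linarith
      have hslope := hball hd hx.1
      rw [slope_def_field] at hslope
      -- slope = ((sol x).2.1 - (sol τ).2.1)/(x - τ)
      rw [hpτ, sub_zero] at hslope
      have hxτ : 0 < x - τ := by linarith [hx.1]
      have := (div_lt_iff₀ hxτ).mp hslope
      nlinarith
    -- a is strictly decreasing on [τ, t2]
    have hanti : StrictAntiOn (fun u => (sol u).1) (Icc τ t2) := by
      apply strictAntiOn_of_deriv_neg (convex_Icc τ t2)
      · refine ContinuousOn.mono (s := Icc (0:ℝ) (1/2)) ?_
            (Icc_subset_Icc (le_of_lt hτ.1) (le_of_lt ht2half))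
        exact fun t ht => (hA t ht).continuousWithinAt
      · intro x hx
        rw [interior_Icc] at hx
        have hxI : x ∈ Ioo (0:ℝ) (1/2) := ⟨lt_trans hτ.1 hx.1, lt_trans hx.2 ht2half⟩
        rw [(hasDerivAt_of_within hA hxI).deriv]
        exact hpneg x hx
    have h1 : (sol t2).1 < (sol τ).1 :=
      hanti (left_mem_Icc.2 hτt2.le) (right_mem_Icc.2 hτt2.le) hτt2
    have h2 : (sol τ).1 ≤ (sol t2).1 :=
      hmin ⟨by linarith [hτ.1], ht2half.le⟩
    linarith
  -- the first integral J
  set J : ℝ → ℝ := fun t => (sol t).1 * (sol t).2.2 - (sol t).2.1 * (sol t).2.1 / 2 with hJdef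
  clear_value J
  have hJ : ∀ t ∈ Icc (0:ℝ) (1/2), HasDerivWithinAt J
      ((sol t).1 * hh δ ((sol t).1)) (Icc (0:ℝ) (1/2)) t := by
    intro t ht
    rw [hJdef]
    have h3 := ((hA t ht).mul (hQ t ht)).sub (((hP t ht).mul (hP t ht)).div_const 2)
    exact h3.congr_deriv (by ring)
  have hJmono : AntitoneOn (fun t => J t - t) (Icc (0:ℝ) (1/2)) := by
    apply myAnti (f' := fun t => (sol t).1 * hh δ ((sol t).1) - 1)
    · intro t ht
      exact (hJ t ht).sub (hasDerivAt_id t).hasDerivWithinAt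
    · intro t _
      have := mul_hh_le_one hδ ((sol t).1)
      linarith
  have hmem0 : (0:ℝ) ∈ Icc (0:ℝ) (1/2) := by constructor <;> norm_num
  have hJτ : J τ - τ ≤ J 0 - 0 := hJmono hmem0 hτI hτ.1.le
  have hJ0 : J 0 = c * s - 1/2 := by simp only [hJdef, h0]; norm_num
  have hJτval : J τ = (sol τ).1 * (sol τ).2.2 := by
    simp only [hJdef, hpτ]; ring
  have hcs : c * s ≤ 0 := mul_nonpos_iff.2 (Or.inl ⟨hc.le, hs⟩)
  have hJneg : J τ < 0 := by
    rw [hJ0] at hJτ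
    have := hτ.2
    linarith
  have hnn : 0 ≤ (sol τ).1 * (sol τ).2.2 := mul_nonneg hge hqτ
  rw [hJτval] at hJneg
  linarith
end Key

lemma myMono {f f' : ℝ → ℝ} {lo hi : ℝ}
    (hf : ∀ t ∈ Icc lo hi, HasDerivWithinAt f (f' t) (Icc lo hi) t)
    (hpos : ∀ t ∈ Ioo lo hi, 0 ≤ f' t) : MonotoneOn f (Icc lo hi) := by
  apply monotoneOn_of_deriv_nonneg (convex_Icc lo hi)
    (fun t ht => (hf t ht).continuousWithinAt)
  · intro x hx
    rw [interior_Icc] at hx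
    exact (hasDerivAt_of_within hf hx).differentiableAt.differentiableWithinAt
  · intro x hx
    rw [interior_Icc] at hx
    rw [(hasDerivAt_of_within hf hx).deriv]
    exact hpos x hx


lemma main_aux {c δ : ℝ} (hδ : 0 < δ) (hc : δ < c) :
    ∃ a p q : ℝ → ℝ,
      (∀ t ∈ Icc (0:ℝ) (1/2), HasDerivWithinAt a (p t) (Icc (0:ℝ) (1/2)) t) ∧
      (∀ t ∈ Icc (0:ℝ) (1/2), HasDerivWithinAt p (q t) (Icc (0:ℝ) (1/2)) t) ∧
      (∀ t ∈ Icc (0:ℝ) (1/2), HasDerivWithinAt q ((a t)⁻¹) (Icc (0:ℝ) (1/2)) t) ∧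
      (∀ t ∈ Icc (0:ℝ) (1/2), c ≤ a t) ∧
      a 0 = c ∧ a (1/2) = c ∧ p 0 = 1 := by
  have hcpos : 0 < c := lt_trans hδ hc
  have hmem0 : (0:ℝ) ∈ Icc (0:ℝ) (1/2) := by constructor <;> norm_num
  have hmemhalf : (1/2:ℝ) ∈ Icc (0:ℝ) (1/2) := by constructor <;> norm_num
  -- the family of solutions
  choose sol h0 hD using fun s => exists_sol hδ c s
  -- component derivatives
  have hA : ∀ s, ∀ t ∈ Icc (0:ℝ) (1/2),
      HasDerivWithinAt (fun u => (sol s u).1) ((sol s t).2.1) (Icc (0:ℝ) (1/2)) t := by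
    intro s t ht
    have h := (ContinuousLinearMap.fst ℝ ℝ (ℝ × ℝ)).hasFDerivAt.comp_hasDerivWithinAt t (hD s t ht)
    simp [Fv] at h; rw [one_div]; exact h
  have hP : ∀ s, ∀ t ∈ Icc (0:ℝ) (1/2),
      HasDerivWithinAt (fun u => (sol s u).2.1) ((sol s t).2.2) (Icc (0:ℝ) (1/2)) t := by
    intro s t ht
    have h1 := (ContinuousLinearMap.snd ℝ ℝ (ℝ × ℝ)).hasFDerivAt.comp_hasDerivWithinAt t (hD s t ht)
    have h := (ContinuousLinearMap.fst ℝ ℝ ℝ).hasFDerivAt.comp_hasDerivWithinAt t h1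
    simp [Fv] at h; rw [one_div]; exact h
  have hQ : ∀ s, ∀ t ∈ Icc (0:ℝ) (1/2),
      HasDerivWithinAt (fun u => (sol s u).2.2) (hh δ ((sol s t).1)) (Icc (0:ℝ) (1/2)) t := by
    intro s t ht
    have h1 := (ContinuousLinearMap.snd ℝ ℝ (ℝ × ℝ)).hasFDerivAt.comp_hasDerivWithinAt t (hD s t ht)
    have h := (ContinuousLinearMap.snd ℝ ℝ ℝ).hasFDerivAt.comp_hasDerivWithinAt t h1
    simp [Fv] at h; rw [one_div]; exact h
  have hCa : ∀ s, ContinuousOn (fun t => (sol s t).1) (Icc (0:ℝ) (1/2)) :=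
    fun s t ht => (hA s t ht).continuousWithinAt
  -- Gronwall comparison
  set EE : ℝ := Real.exp ((KK δ : ℝ) * (1/2)) with hEE
  have hEpos : 0 < EE := Real.exp_pos _
  have hGron : ∀ s s' : ℝ, ∀ t ∈ Icc (0:ℝ) (1/2),
      |(sol s t).1 - (sol s' t).1| ≤ |s - s'| * EE := by
    intro s s' t ht
    have hdist : dist (sol s t) (sol s' t) ≤ |s - s'| * Real.exp ((KK δ : ℝ) * (t - 0)) := by
      apply dist_le_of_trajectories_ODE (v := fun _ z => Fv δ z)
        (fun _ => Fv_lipschitz hδ)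
        (fun u hu => (hD s u hu).continuousWithinAt)
        ?_
        (fun u hu => (hD s' u hu).continuousWithinAt)
        ?_ ?_ t ht
      · intro u hu
        exact (hD s u (Ico_subset_Icc_self hu)).mono_of_mem_nhdsWithin
          (Icc_mem_nhdsGE_of_mem hu)
      · intro u hu
        exact (hD s' u (Ico_subset_Icc_self hu)).mono_of_mem_nhdsWithin
          (Icc_mem_nhdsGE_of_mem hu)
      · rw [h0 s, h0 s']
        apply le_of_eq
        simp [Prod.dist_eq, Real.dist_eq]
    have h1 : |(sol s t).1 - (sol s' t).1| ≤ dist (sol s t) (sol s' t) := by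
      rw [← Real.dist_eq]
      rw [Prod.dist_eq]
      exact le_max_left _ _
    have h2 : Real.exp ((KK δ : ℝ) * (t - 0)) ≤ EE := by
      rw [hEE]
      apply Real.exp_le_exp.2
      apply mul_le_mul_of_nonneg_left _ (KK δ).2
      simpa using ht.2
    calc |(sol s t).1 - (sol s' t).1| ≤ |s - s'| * Real.exp ((KK δ : ℝ) * (t - 0)) :=
          le_trans h1 hdist
      _ ≤ |s - s'| * EE := mul_le_mul_of_nonneg_left h2 (abs_nonneg _)
  -- minimizers
  have hminex : ∀ s : ℝ, ∃ τ ∈ Icc (0:ℝ) (1/2), IsMinOn (fun t => (sol s t).1) (Icc (0:ℝ) (1/2)) τ :=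
    fun s => isCompact_Icc.exists_isMinOn ⟨0, hmem0⟩ (hCa s)
  choose τm hτmI hτmin using hminex
  set M : ℝ → ℝ := fun s => (sol s (τm s)).1 with hM
  have hMval : ∀ s, M s = (sol s (τm s)).1 := fun s => rfl
  clear_value M
  have hMmin : ∀ s, ∀ t ∈ Icc (0:ℝ) (1/2), M s ≤ (sol s t).1 := by
    intro s t ht
    rw [hMval]
    exact hτmin s ht
  -- M is Lipschitz, hence continuous
  have hMdiff : ∀ s s', M s ≤ M s' + |s - s'| * EE := by
    intro s s'
    have h1 : M s ≤ (sol s (τm s')).1 := hMmin s _ (hτmI s')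
    have h2 : |(sol s (τm s')).1 - (sol s' (τm s')).1| ≤ |s - s'| * EE :=
      hGron s s' _ (hτmI s')
    have h3 := abs_le.1 h2
    have h4 : M s' = (sol s' (τm s')).1 := hMval s'
    linarith [h3.2]
  have hMcont : Continuous M := by
    have : LipschitzWith (Real.toNNReal EE) M := by
      apply LipschitzWith.of_dist_le_mul
      intro s s'
      rw [Real.coe_toNNReal _ hEpos.le, Real.dist_eq, Real.dist_eq, mul_comm]
      have h1 := hMdiff s s'
      have h2 := hMdiff s' s
      rw [abs_sub_comm s' s] at h2
      rw [abs_le]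
      constructor <;> [linarith [abs_nonneg (s - s')]; linarith]
    exact this.continuous
  -- σ : value at the right endpoint
  set σ : ℝ → ℝ := fun s => (sol s (1/2)).1 with hσ
  have hσval : ∀ s, σ s = (sol s (1/2)).1 := fun s => rfl
  clear_value σ
  have hσcont : Continuous σ := by
    have : LipschitzWith (Real.toNNReal EE) σ := by
      apply LipschitzWith.of_dist_le_mul
      intro s s'
      rw [Real.coe_toNNReal _ hEpos.le, Real.dist_eq, Real.dist_eq, hσval, hσval,
        mul_comm]
      exact hGron s s' _ hmemhalf
    exact this.continuous
  -- facts at s = 0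
  have hq0 : ∀ t ∈ Icc (0:ℝ) (1/2), 0 ≤ (sol 0 t).2.2 := by
    intro t ht
    have hmono : MonotoneOn (fun t => (sol 0 t).2.2) (Icc (0:ℝ) (1/2)) :=
      myMono (hQ 0) (fun x _ => (hh_pos hδ _).le)
    have := hmono hmem0 ht ht.1
    simpa [h0 0] using this
  have hp0 : ∀ t ∈ Icc (0:ℝ) (1/2), 1 ≤ (sol 0 t).2.1 := by
    intro t ht
    have hmono : MonotoneOn (fun t => (sol 0 t).2.1) (Icc (0:ℝ) (1/2)) :=
      myMono (hP 0) (fun x hx => hq0 x (Ioo_subset_Icc_self hx))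
    have := hmono hmem0 ht ht.1
    simpa [h0 0] using this
  have ha0mono : ∀ t ∈ Icc (0:ℝ) (1/2), c ≤ (sol 0 t).1 := by
    intro t ht
    have hmono : MonotoneOn (fun t => (sol 0 t).1) (Icc (0:ℝ) (1/2)) :=
      myMono (hA 0) (fun x hx => le_trans zero_le_one (hp0 x (Ioo_subset_Icc_self hx)))
    have := hmono hmem0 ht ht.1
    simpa [h0 0] using this
  have hσ0 : c + 1/2 ≤ σ 0 := by
    have hmono : MonotoneOn (fun t => (sol 0 t).1 - t) (Icc (0:ℝ) (1/2)) := by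
      apply myMono (f' := fun t => (sol 0 t).2.1 - 1)
      · intro t ht
        exact (hA 0 t ht).sub (hasDerivAt_id t).hasDerivWithinAt
      · intro x hx
        have := hp0 x (Ioo_subset_Icc_self hx)
        linarith
    have := hmono hmem0 hmemhalf (by norm_num)
    rw [hσval]
    simp only [h0 0] at this
    norm_num at this ⊢
    linarith
  -- very negative shooting parameter makes the solution dip below δ
  set smin : ℝ := -(32*(c + 1/4 + δ⁻¹/384) + 1) with hsmindef
  have hdinv : 0 < δ⁻¹ := by positivity
  have hsminneg : smin < 0 := by rw [hsmindef]; nlinarith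
  have hqs : ∀ t ∈ Icc (0:ℝ) (1/2), (sol smin t).2.2 ≤ smin + t * δ⁻¹ := by
    have hw : ∀ t ∈ Icc (0:ℝ) (1/2), HasDerivWithinAt
        (fun u => (sol smin u).2.2 - (smin + u * δ⁻¹))
        (hh δ ((sol smin t).1) - δ⁻¹) (Icc (0:ℝ) (1/2)) t := by
      intro t ht
      have hpoly : HasDerivAt (fun u : ℝ => smin + u * δ⁻¹) δ⁻¹ t := by
        simpa using ((hasDerivAt_id t).mul_const δ⁻¹).const_add smin
      exact (hQ smin t ht).sub hpoly.hasDerivWithinAt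
    have hanti := myAnti hw (fun x _ => by
      have := hh_le hδ ((sol smin x).1); linarith)
    intro t ht
    have h : (sol smin t).2.2 - (smin + t * δ⁻¹) ≤ (sol smin 0).2.2 - (smin + 0 * δ⁻¹) :=
      hanti hmem0 ht ht.1
    rw [h0 smin] at h
    norm_num at h
    linarith
  have hps : ∀ t ∈ Icc (0:ℝ) (1/2), (sol smin t).2.1 ≤ 1 + smin * t + t^2 * δ⁻¹ / 2 := by
    have hw : ∀ t ∈ Icc (0:ℝ) (1/2), HasDerivWithinAt
        (fun u => (sol smin u).2.1 - (1 + smin * u + u^2 * δ⁻¹ / 2))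
        ((sol smin t).2.2 - (smin + t * δ⁻¹)) (Icc (0:ℝ) (1/2)) t := by
      intro t ht
      have hpoly : HasDerivAt (fun u : ℝ => 1 + smin * u + u^2 * δ⁻¹ / 2)
          (smin + t * δ⁻¹) t := by
        have h1 : HasDerivAt (fun u : ℝ => 1 + smin * u) (smin * 1) t :=
          ((hasDerivAt_id t).const_mul smin).const_add 1
        have h2 : HasDerivAt (fun u : ℝ => u^2 * (δ⁻¹ / 2)) ((2 * t ^ 1) * (δ⁻¹ / 2)) t :=
          (hasDerivAt_pow 2 t).mul_const (δ⁻¹ / 2)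
        have h3 := h1.add h2
        refine (h3.congr_deriv (by ring)).congr_of_eventuallyEq
          (Filter.Eventually.of_forall fun u => ?_)
        simp only [Pi.add_apply]; ring
      exact (hP smin t ht).sub hpoly.hasDerivWithinAt
    have hanti := myAnti hw (fun x hx => by
      have := hqs x (Ioo_subset_Icc_self hx); linarith)
    intro t ht
    have h : (sol smin t).2.1 - (1 + smin * t + t^2 * δ⁻¹ / 2)
        ≤ (sol smin 0).2.1 - (1 + smin * 0 + 0^2 * δ⁻¹ / 2) := hanti hmem0 ht ht.1
    rw [h0 smin] at h
    norm_num at h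
    linarith
  have has : ∀ t ∈ Icc (0:ℝ) (1/2),
      (sol smin t).1 ≤ c + t + smin * t^2 / 2 + t^3 * δ⁻¹ / 6 := by
    have hw : ∀ t ∈ Icc (0:ℝ) (1/2), HasDerivWithinAt
        (fun u => (sol smin u).1 - (c + u + smin * u^2 / 2 + u^3 * δ⁻¹ / 6))
        ((sol smin t).2.1 - (1 + smin * t + t^2 * δ⁻¹ / 2)) (Icc (0:ℝ) (1/2)) t := by
      intro t ht
      have hpoly : HasDerivAt (fun u : ℝ => c + u + smin * u^2 / 2 + u^3 * δ⁻¹ / 6)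
          (1 + smin * t + t^2 * δ⁻¹ / 2) t := by
        have h1 : HasDerivAt (fun u : ℝ => c + u) 1 t := (hasDerivAt_id t).const_add c
        have h2 : HasDerivAt (fun u : ℝ => u^2 * (smin / 2)) ((2 * t ^ 1) * (smin / 2)) t :=
          (hasDerivAt_pow 2 t).mul_const (smin / 2)
        have h3 : HasDerivAt (fun u : ℝ => u^3 * (δ⁻¹ / 6)) ((3 * t ^ 2) * (δ⁻¹ / 6)) t :=
          (hasDerivAt_pow 3 t).mul_const (δ⁻¹ / 6)
        have h4 := (h1.add h2).add h3
        refine (h4.congr_deriv (by ring)).congr_of_eventuallyEq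
          (Filter.Eventually.of_forall fun u => ?_)
        simp only [Pi.add_apply]; ring
      exact (hA smin t ht).sub hpoly.hasDerivWithinAt
    have hanti := myAnti hw (fun x hx => by
      have := hps x (Ioo_subset_Icc_self hx); linarith)
    intro t ht
    have h : (sol smin t).1 - (c + t + smin * t^2 / 2 + t^3 * δ⁻¹ / 6)
        ≤ (sol smin 0).1 - (c + 0 + smin * 0^2 / 2 + 0^3 * δ⁻¹ / 6) := hanti hmem0 ht ht.1
    rw [h0 smin] at h
    norm_num at h
    linarith
  have hmem14 : (1/4:ℝ) ∈ Icc (0:ℝ) (1/2) := by constructor <;> norm_num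
  have hMsmin : M smin ≤ δ := by
    have h1 := hMmin smin _ hmem14
    have h2 := has _ hmem14
    have h3 : c + 1/4 + smin * (1/4)^2 / 2 + (1/4)^3 * δ⁻¹ / 6 = -1/32 := by
      rw [hsmindef]; ring
    nlinarith
  -- the set A and its supremum
  set A : Set ℝ := {s : ℝ | s ∈ Icc smin 0 ∧ M s ≤ δ} with hAdef
  have hAclosed : IsClosed A := by
    have : A = Icc smin 0 ∩ M ⁻¹' (Iic δ) := by
      ext s; simp [hAdef, and_comm]
    rw [this]
    exact isClosed_Icc.inter (isClosed_Iic.preimage hMcont)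
  have hAne : smin ∈ A := ⟨⟨le_refl _, hsminneg.le⟩, hMsmin⟩
  have hAbdd : BddAbove A := ⟨0, fun x hx => hx.1.2⟩
  set s₀ : ℝ := sSup A with hs₀def
  have hs₀A : s₀ ∈ A := hAclosed.csSup_mem ⟨smin, hAne⟩ hAbdd
  have hsmins₀ : smin ≤ s₀ := le_csSup hAbdd hAne
  have hM0 : c ≤ M 0 := by
    rw [hMval]
    exact ha0mono _ (hτmI 0)
  have hs₀neg : s₀ < 0 := by
    rcases lt_or_eq_of_le hs₀A.1.2 with h | h
    · exact h
    · exfalso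
      have := hs₀A.2
      rw [h] at this
      linarith
  have hnotA : ∀ s, s₀ < s → s ≤ 0 → δ < M s := by
    intro s hs hs0
    by_contra hle
    push_neg at hle
    have : s ∈ A := ⟨⟨le_trans hsmins₀ hs.le, hs0⟩, hle⟩
    exact absurd (le_csSup hAbdd this) (not_le.2 hs)
  -- M s₀ = δ
  have hMs₀ : M s₀ = δ := by
    rcases lt_or_eq_of_le hs₀A.2 with hlt | heq
    · exfalso
      set ε : ℝ := min (-s₀) ((δ - M s₀) / (EE + 1)) with hεdef
      have hεpos : 0 < ε := lt_min (by linarith) (div_pos (by linarith) (by linarith))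
      have hεle : ε ≤ -s₀ := min_le_left _ _
      have hεle2 : ε ≤ (δ - M s₀) / (EE + 1) := min_le_right _ _
      have h1 : M (s₀ + ε) ≤ M s₀ + |s₀ + ε - s₀| * EE := hMdiff _ _
      have h2 : |s₀ + ε - s₀| = ε := by
        rw [show s₀ + ε - s₀ = ε by ring, abs_of_pos hεpos]
      have h3 : ε * EE ≤ (δ - M s₀) / (EE + 1) * EE :=
        mul_le_mul_of_nonneg_right hεle2 hEpos.le
      have h4 : (δ - M s₀) / (EE + 1) * EE < δ - M s₀ := by
        rw [div_mul_eq_mul_div, div_lt_iff₀ (by linarith)]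
        nlinarith
      have h5 : M (s₀ + ε) < δ := by rw [h2] at h1; linarith
      have : δ < M (s₀ + ε) := hnotA _ (by linarith) (by linarith)
      linarith
    · exact heq
  -- the minimum of a s₀ is attained at 1/2, so σ s₀ = δ
  have hσs₀ : σ s₀ = δ := by
    have hval : (sol s₀ (τm s₀)).1 = δ := by rw [← hMval, hMs₀]
    rcases eq_or_lt_of_le (hτmI s₀).1 with h1 | h1
    · exfalso
      have : (sol s₀ 0).1 = δ := by rw [← h1] at hval; exact hval
      rw [h0 s₀] at this
      simp at this
      linarith
    rcases eq_or_lt_of_le (hτmI s₀).2 with h2 | h2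
    · rw [hσval, ← h2]
      exact hval
    · exfalso
      have hneg := key hδ hcpos hs₀neg.le (h0 s₀) (hA s₀) (hP s₀) (hQ s₀)
        ⟨h1, h2⟩ (hτmin s₀)
      rw [hval] at hneg
      linarith
  -- intermediate value: find s* with σ s* = c
  have hIVT := intermediate_value_Icc hs₀neg.le (hσcont.continuousOn (s := Icc s₀ 0))
  have hcmem : c ∈ Icc (σ s₀) (σ 0) := by
    rw [hσs₀]
    exact ⟨hc.le, by linarith⟩
  obtain ⟨sstar, hsstarmem, hσsstar⟩ := hIVT hcmem
  have hsstar_gt : s₀ < sstar := by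
    rcases lt_or_eq_of_le hsstarmem.1 with h | h
    · exact h
    · exfalso
      rw [← h] at hσsstar
      rw [hσs₀] at hσsstar
      linarith
  have hsstar_neg : sstar < 0 := by
    rcases lt_or_eq_of_le hsstarmem.2 with h | h
    · exact h
    · exfalso
      rw [h] at hσsstar
      linarith
  have hMsstar : δ < M sstar := hnotA _ hsstar_gt hsstar_neg.le
  -- the solution at sstar is everywhere > δ, and its min is at an endpoint with value c
  have hge : ∀ t ∈ Icc (0:ℝ) (1/2), δ < (sol sstar t).1 := by
    intro t ht
    exact lt_of_lt_of_le hMsstar (hMmin sstar t ht)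
  have hmin_c : ∀ t ∈ Icc (0:ℝ) (1/2), c ≤ (sol sstar t).1 := by
    have hval : M sstar = (sol sstar (τm sstar)).1 := hMval sstar
    rcases eq_or_lt_of_le (hτmI sstar).1 with h1 | h1
    · intro t ht
      have : M sstar = c := by
        rw [hval, ← h1, h0 sstar]
      rw [← this]
      exact hMmin sstar t ht
    rcases eq_or_lt_of_le (hτmI sstar).2 with h2 | h2
    · intro t ht
      have : M sstar = c := by
        rw [hval, h2, ← hσval sstar]; exact hσsstar
      rw [← this]
      exact hMmin sstar t ht
    · exfalso
      have hneg := key hδ hcpos hsstar_neg.le (h0 sstar) (hA sstar) (hP sstar) (hQ sstar)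
        ⟨h1, h2⟩ (hτmin sstar)
      have := hge _ (hτmI sstar)
      linarith
  -- conclusion
  refine ⟨fun t => (sol sstar t).1, fun t => (sol sstar t).2.1, fun t => (sol sstar t).2.2,
    hA sstar, hP sstar, ?_, hmin_c, ?_, ?_, ?_⟩
  · intro t ht
    have h := hQ sstar t ht
    rwa [hh_eq (le_of_lt (hge t ht))] at h
  · show (sol sstar 0).1 = c
    rw [h0 sstar]
  · show (sol sstar (1/2)).1 = c
    rw [← hσval sstar]; exact hσsstar
  · show (sol sstar 0).2.1 = 1
    rw [h0 sstar]

end ApproxSolve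

/-- Solvability of the approximating problems (1.4): for each integer `k ≥ 1` there is a
positive `C³[0,1/2]` function `φ` with `φ''' = 1/φ` on `[0,1/2]`, `φ(0) = φ(1/2) = 1/k`
and `φ'(0) = 1` (derivatives taken within `[0,1/2]`). -/
theorem approximating_problem_solvable (k : ℕ) (hk : 1 ≤ k) :
    ∃ φ : ℝ → ℝ,
      ContDiffOn ℝ 3 φ (Set.Icc 0 (1/2)) ∧
      (∀ η ∈ Set.Icc (0:ℝ) (1/2), 0 < φ η) ∧
      (∀ η ∈ Set.Icc (0:ℝ) (1/2),
        iteratedDerivWithin 3 φ (Set.Icc 0 (1/2)) η = 1 / φ η) ∧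
      φ 0 = 1 / k ∧ φ (1/2) = 1 / k ∧
      derivWithin φ (Set.Icc 0 (1/2)) 0 = 1 := by
  have hk1 : (1:ℝ) ≤ (k:ℝ) := by exact_mod_cast hk
  have hkpos : (0:ℝ) < (k:ℝ) := by linarith
  have hcpos : (0:ℝ) < 1/(k:ℝ) := by positivity
  obtain ⟨a, p, q, hA, hP, hQ, hge, ha0, hahalf, hp0⟩ :=
    ApproxSolve.main_aux (c := 1/(k:ℝ)) (δ := 1/(k:ℝ)/2) (by positivity) (by linarith)
  have uD : UniqueDiffOn ℝ (Set.Icc (0:ℝ) (1/2)) := uniqueDiffOn_Icc (by norm_num)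
  have hmem0 : (0:ℝ) ∈ Set.Icc (0:ℝ) (1/2) := by constructor <;> norm_num
  have hapos : ∀ η ∈ Set.Icc (0:ℝ) (1/2), 0 < a η :=
    fun η hη => lt_of_lt_of_le hcpos (hge η hη)
  have hconta : ContinuousOn a (Set.Icc (0:ℝ) (1/2)) :=
    fun t ht => (hA t ht).continuousWithinAt
  have hcontinv : ContinuousOn (fun t => (a t)⁻¹) (Set.Icc (0:ℝ) (1/2)) :=
    hconta.inv₀ (fun t ht => (hapos t ht).ne')
  have hDa : ∀ t ∈ Set.Icc (0:ℝ) (1/2), derivWithin a (Set.Icc (0:ℝ) (1/2)) t = p t :=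
    fun t ht => (hA t ht).derivWithin (uD t ht)
  have hDp : ∀ t ∈ Set.Icc (0:ℝ) (1/2), derivWithin p (Set.Icc (0:ℝ) (1/2)) t = q t :=
    fun t ht => (hP t ht).derivWithin (uD t ht)
  have hDq : ∀ t ∈ Set.Icc (0:ℝ) (1/2),
      derivWithin q (Set.Icc (0:ℝ) (1/2)) t = (a t)⁻¹ :=
    fun t ht => (hQ t ht).derivWithin (uD t ht)
  refine ⟨a, ?_, hapos, ?_, ?_, ?_, ?_⟩
  · -- C³
    have hC0 : ContDiffOn ℝ 0 (fun t => (a t)⁻¹) (Set.Icc (0:ℝ) (1/2)) :=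
      contDiffOn_zero.mpr hcontinv
    have hC1 : ContDiffOn ℝ 1 q (Set.Icc (0:ℝ) (1/2)) := by
      rw [show (1 : WithTop ℕ∞) = 0 + 1 by norm_num, contDiffOn_succ_iff_derivWithin uD]
      refine ⟨fun t ht => (hQ t ht).differentiableWithinAt, by simp, ?_⟩
      exact hC0.congr (fun t ht => hDq t ht)
    have hC2 : ContDiffOn ℝ 2 p (Set.Icc (0:ℝ) (1/2)) := by
      rw [show (2 : WithTop ℕ∞) = 1 + 1 by norm_num, contDiffOn_succ_iff_derivWithin uD]
      refine ⟨fun t ht => (hP t ht).differentiableWithinAt, by simp, ?_⟩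
      exact hC1.congr (fun t ht => hDp t ht)
    rw [show (3 : WithTop ℕ∞) = 2 + 1 by norm_num, contDiffOn_succ_iff_derivWithin uD]
    refine ⟨fun t ht => (hA t ht).differentiableWithinAt, by simp, ?_⟩
    exact hC2.congr (fun t ht => hDa t ht)
  · -- third derivative
    intro η hη
    have i1 : ∀ x ∈ Set.Icc (0:ℝ) (1/2),
        iteratedDerivWithin 1 a (Set.Icc (0:ℝ) (1/2)) x = p x := by
      intro x hx
      rw [iteratedDerivWithin_one]
      exact hDa x hx
    have i2 : ∀ x ∈ Set.Icc (0:ℝ) (1/2),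
        iteratedDerivWithin 2 a (Set.Icc (0:ℝ) (1/2)) x = q x := by
      intro x hx
      rw [show (2:ℕ) = 1 + 1 from rfl, iteratedDerivWithin_succ,
        derivWithin_congr (fun y hy => i1 y hy) (i1 x hx)]
      exact hDp x hx
    rw [show (3:ℕ) = 2 + 1 from rfl, iteratedDerivWithin_succ,
      derivWithin_congr (fun y hy => i2 y hy) (i2 η hη), hDq η hη, one_div]
  · rw [ha0]
  · rw [hahalf]
  · rw [hDa 0 hmem0, hp0]
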